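/- Let E^{(i)} ∈ F_{q^m}^{h_i × N_i} have F_q-rank t_i for i = 1, ..., ℓ, let R^{(i)} = C^{(i)} + E^{(i)} where C^{(i)} is the i-th block of an FLRS codeword for a message polynomial f of degree < k, and let Q be a nonzero solution of the interpolation problem with parameter s and degree bound D. If D ≤ Σ_{i=1}^{ℓ} (N_i − t_i)(h_i − s + 1), then the univariate skew polynomial P(x) = Q_0(x) + Q_1(x)f(x) + Q_2(x)f(x)γ + ... + Q_s(x)f(x)γ^{s−1} is the zero polynomial. -/

import Mathlib

open Polynomial Finset
set_option synthInstance.maxHeartbeats 1000000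
set_option maxHeartbeats 1000000

/-- Iterated generalized operator `D_a^r(b)` for zero derivation: `D_a(b) = σ(b)·a`. -/
def Dit {F : Type*} [Field F] (σ : F ≃+* F) (a b : F) : ℕ → F
  | 0 => b
  | r + 1 => σ (Dit σ a b r) * a

/-- Generalized operator evaluation of a skew polynomial at `b` w.r.t. parameter `a`. -/
noncomputable def opev {F : Type*} [Field F] (σ : F ≃+* F) (f : Polynomial F)
    (a b : F) : F :=
  ∑ r ∈ f.support, f.coeff r * Dit σ a b r

/-- The fixed subfield `F_q` of the automorphism `σ`. -/
def fixedSubfield {F : Type*} [Field F] (σ : F ≃+* F) : Subfield F where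
  carrier := {x | σ x = x}
  mul_mem' := by
    intro a b (ha : σ a = a) (hb : σ b = b)
    show σ (a * b) = a * b
    rw [map_mul, ha, hb]
  one_mem' := by show σ 1 = 1; simp
  add_mem' := by
    intro a b (ha : σ a = a) (hb : σ b = b)
    show σ (a + b) = a + b
    rw [map_add, ha, hb]
  zero_mem' := by show σ 0 = 0; simp
  neg_mem' := by
    intro a (ha : σ a = a)
    show σ (-a) = -a
    rw [map_neg, ha]
  inv_mem' := by
    intro a (ha : σ a = a)
    show σ a⁻¹ = a⁻¹
    rw [map_inv₀, ha]

/-- The `F_q`-rank of a matrix over `F_{q^m}`: the dimension over the fixed subfield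
of the span of its columns. -/
noncomputable def colRank {F : Type*} [Field F] (σ : F ≃+* F) {h N : ℕ}
    (M : Matrix (Fin h) (Fin N) F) : ℕ :=
  Module.finrank (fixedSubfield σ)
    (Submodule.span (fixedSubfield σ) (Set.range fun j : Fin N => fun r : Fin h => M r j))


section Toolkit

variable {F : Type*} [Field F] (σ : F ≃+* F)

lemma iter_eq_pow (u : ℕ) (x : F) : (⇑σ)^[u] x = (σ^u) x := by
  induction u generalizing x with
  | zero => rfl
  | succ n ih => rw [Function.iterate_succ_apply, ih, pow_succ]; rfl

lemma Dit_add (a b c : F) (r : ℕ) : Dit σ a (b + c) r = Dit σ a b r + Dit σ a c r := by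
  induction r with
  | zero => rfl
  | succ n ih => simp only [Dit, ih, map_add, add_mul]

lemma Dit_zero (a : F) (r : ℕ) : Dit σ a 0 r = 0 := by
  induction r with
  | zero => rfl
  | succ n ih => simp only [Dit, ih, map_zero, zero_mul]

lemma Dit_mul (a b c : F) (r : ℕ) : Dit σ a (b * c) r = (σ^r) b * Dit σ a c r := by
  induction r with
  | zero => rw [pow_zero]; rfl
  | succ n ih => simp only [Dit, ih, map_mul, pow_succ', mul_assoc]; rfl

lemma Dit_eq (a b : F) (r : ℕ) : Dit σ a b r = (σ^r) b * Dit σ a 1 r := by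
  rw [← Dit_mul, mul_one]

lemma Dit_comp (a b : F) (u v : ℕ) : Dit σ a b (u + v) = Dit σ a (Dit σ a b v) u := by
  induction u with
  | zero => rw [Nat.zero_add]; rfl
  | succ n ih => rw [Nat.succ_add]; simp only [Dit, ih]

lemma Dit_one_add (a : F) (u v : ℕ) :
    Dit σ a 1 (u + v) = (σ^u) (Dit σ a 1 v) * Dit σ a 1 u := by
  rw [Dit_comp, Dit_eq]

lemma opev_eq_range (p : F[X]) (a b : F) {N : ℕ} (hN : p.natDegree < N) :
    opev σ p a b = ∑ r ∈ Finset.range N, p.coeff r * Dit σ a b r := by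
  rw [opev, Finset.sum_subset (supp_subset_range hN)]
  intro x _ hx
  rw [notMem_support_iff.mp hx, zero_mul]

lemma opev_zero (a b : F) : opev σ (0 : F[X]) a b = 0 := by
  simp [opev]

lemma opev_C (c a b : F) : opev σ (C c) a b = c * b := by
  rw [opev_eq_range σ _ a b (N := 1) (by simp)]
  simp [Dit]

lemma opev_add (p q : F[X]) (a b : F) :
    opev σ (p + q) a b = opev σ p a b + opev σ q a b := by
  set N := (p+q).natDegree + p.natDegree + q.natDegree + 1 with hN
  rw [opev_eq_range σ _ a b (N := N) (by omega),
      opev_eq_range σ p a b (N := N) (by omega),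
      opev_eq_range σ q a b (N := N) (by omega), ← Finset.sum_add_distrib]
  exact Finset.sum_congr rfl fun r _ => by rw [coeff_add, add_mul]

lemma opev_sum {ι : Type*} (t : Finset ι) (p : ι → F[X]) (a b : F) :
    opev σ (∑ i ∈ t, p i) a b = ∑ i ∈ t, opev σ (p i) a b := by
  induction t using Finset.cons_induction with
  | empty => simp [opev_zero]
  | cons i t hi ih => rw [Finset.sum_cons, opev_add, ih, Finset.sum_cons]

lemma opev_add_right (p : F[X]) (a b c : F) :
    opev σ p a (b + c) = opev σ p a b + opev σ p a c := by
  simp only [opev, Dit_add, mul_add, Finset.sum_add_distrib]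

lemma opev_zero_right (p : F[X]) (a : F) : opev σ p a 0 = 0 := by
  simp [opev, Dit_zero]

lemma opev_smul_right (p : F[X]) (a b c : F) (hc : σ c = c) :
    opev σ p a (c * b) = c * opev σ p a b := by
  have hc' : ∀ r : ℕ, (σ^r) c = c := by
    intro r; induction r with
    | zero => rfl
    | succ n ih => rw [pow_succ]; show (σ^n) (σ c) = c; rw [hc, ih]
  simp only [opev, Finset.mul_sum, Dit_mul, hc']
  exact Finset.sum_congr rfl fun r _ => by ring
noncomputable def skewMul (p g : F[X]) : F[X] :=
  ∑ u ∈ p.support, C (p.coeff u) * (g.map ((σ^u : F ≃+* F) : F →+* F)) * X^u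

lemma skewMul_coeff (p g : F[X]) (n : ℕ) :
    (skewMul σ p g).coeff n = ∑ u ∈ Finset.range (n+1), p.coeff u * (σ^u) (g.coeff (n - u)) := by
  rw [skewMul, finset_sum_coeff]
  have h1 : ∀ u, (C (p.coeff u) * (g.map ((σ^u : F ≃+* F) : F →+* F)) * X^u).coeff n
      = if u ≤ n then p.coeff u * (σ^u) (g.coeff (n - u)) else 0 := by
    intro u
    rw [coeff_mul_X_pow']
    split
    · rw [coeff_C_mul, coeff_map]; rfl
    · rfl
  simp only [h1]
  rw [Finset.sum_ite, Finset.sum_const_zero, add_zero]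
  apply Finset.sum_subset
  · intro x hx
    simp only [Finset.mem_filter, Finset.mem_range] at *
    omega
  · intro x hx hx'
    rw [Finset.mem_range] at hx
    have : p.coeff x = 0 := by
      by_contra h
      exact hx' (Finset.mem_filter.mpr ⟨mem_support_iff.mpr h, by omega⟩)
    rw [this, zero_mul]

lemma skewMul_zero_left (g : F[X]) : skewMul σ 0 g = 0 := by simp [skewMul]

lemma skewMul_add_left (p q g : F[X]) :
    skewMul σ (p + q) g = skewMul σ p g + skewMul σ q g := by
  ext n
  simp only [skewMul_coeff, coeff_add, ← Finset.sum_add_distrib]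
  exact Finset.sum_congr rfl fun u _ => by rw [add_mul]

lemma skewMul_natDegree_le (p g : F[X]) :
    (skewMul σ p g).natDegree ≤ p.natDegree + g.natDegree := by
  apply natDegree_le_iff_coeff_eq_zero.mpr
  intro N hN
  rw [skewMul_coeff]
  apply Finset.sum_eq_zero
  intro u hu
  simp only [Finset.mem_range] at hu
  by_cases h : u ≤ p.natDegree
  · have : g.natDegree < N - u := by omega
    rw [coeff_eq_zero_of_natDegree_lt this, map_zero, mul_zero]
  · rw [coeff_eq_zero_of_natDegree_lt (by omega), zero_mul]

lemma opev_monomial_map (c : F) (u : ℕ) (g : F[X]) (a b : F) :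
    opev σ (C c * (g.map ((σ^u : F ≃+* F) : F →+* F)) * X^u) a b
      = c * (σ^u) (opev σ g a b) * Dit σ a 1 u := by
  set q : F[X] := C c * (g.map ((σ^u : F ≃+* F) : F →+* F)) * X^u with hq
  have hdq : q.natDegree < u + (g.natDegree + 1) := by
    calc q.natDegree ≤ (C c * (g.map ((σ^u : F ≃+* F) : F →+* F))).natDegree + u := by
          simpa using natDegree_mul_le (p := C c * _) (q := (X:F[X])^u)
    _ < u + (g.natDegree + 1) := by
          have h1 := natDegree_C_mul_le c (g.map ((σ^u : F ≃+* F) : F →+* F))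
          have h2 : (g.map ((σ^u : F ≃+* F) : F →+* F)).natDegree ≤ g.natDegree :=
            natDegree_map_le
          omega
  rw [opev_eq_range σ q a b hdq, Finset.range_eq_Ico,
    ← Finset.sum_Ico_consecutive _ (Nat.zero_le u) (Nat.le_add_right u (g.natDegree + 1))]
  have h0 : ∑ r ∈ Finset.Ico 0 u, q.coeff r * Dit σ a b r = 0 := by
    apply Finset.sum_eq_zero
    intro r hr
    rw [Finset.mem_Ico] at hr
    rw [hq, coeff_mul_X_pow', if_neg (by omega), zero_mul]
  rw [h0, zero_add, Finset.sum_Ico_eq_sum_range]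
  have hrw : ∀ v, q.coeff (u + v) = c * (σ^u) (g.coeff v) := by
    intro v
    rw [hq, add_comm u v, coeff_mul_X_pow, coeff_C_mul, coeff_map]; rfl
  rw [opev_eq_range σ g a b (N := g.natDegree + 1) (Nat.lt_succ_self _), map_sum,
    Finset.mul_sum, Finset.sum_mul]
  simp only [add_tsub_cancel_left]
  apply Finset.sum_congr rfl
  intro v _
  rw [hrw v, Dit_comp, Dit_eq σ a (Dit σ a b v) u, map_mul]
  ring

lemma opev_skewMul (p g : F[X]) (a b : F) :
    opev σ (skewMul σ p g) a b = opev σ p a (opev σ g a b) := by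
  rw [skewMul, opev_sum, opev]
  apply Finset.sum_congr rfl
  intro u _
  rw [opev_monomial_map, Dit_eq σ a (opev σ g a b) u]
  ring

lemma natDegree_linear_le (α : F) : (X - C α : F[X]).natDegree ≤ 1 := by
  have h := natDegree_sub_le (X : F[X]) (C α)
  simpa [natDegree_X, natDegree_C] using h

lemma opev_linear (α a b : F) : opev σ (X - C α) a b = σ b * a - α * b := by
  have h2 : (X - C α : F[X]).natDegree < 2 := lt_of_le_of_lt (natDegree_linear_le α) one_lt_two
  rw [opev_eq_range σ _ a b h2]
  simp only [Finset.sum_range_succ, Finset.sum_range_zero, zero_add, coeff_sub, coeff_X_zero,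
    coeff_C_zero, coeff_X_one, coeff_C, if_neg one_ne_zero]
  show (0 - α) * b + (1 - 0) * (σ b * a) = σ b * a - α * b
  ring

lemma skew_div (α : F) : ∀ d (p : F[X]), p.natDegree ≤ d →
    ∃ q ρ, p = skewMul σ q (X - C α) + C ρ ∧ (q = 0 ∨ q.natDegree < p.natDegree) ∧
      (p.natDegree ≠ 0 → q.coeff (p.natDegree - 1) = p.coeff p.natDegree) := by
  intro d
  induction d with
  | zero =>
    intro p hp
    have h0 : p.natDegree = 0 := Nat.le_zero.mp hp
    refine ⟨0, p.coeff 0, ?_, Or.inl rfl, fun h => absurd h0 h⟩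
    rw [skewMul_zero_left, zero_add, ← eq_C_of_natDegree_eq_zero h0]
  | succ d ih =>
    intro p hp
    by_cases hd : p.natDegree ≤ d
    · exact ih p hd
    have hdeg : p.natDegree = d + 1 := by omega
    set c := p.coeff (d+1) with hc
    set S : F[X] := skewMul σ (C c * X^d) (X - C α) with hS
    have hmd : (C c * X^d : F[X]).natDegree ≤ d := by
      have := natDegree_C_mul_le c ((X:F[X])^d)
      simpa [natDegree_X_pow] using this
    have hSdeg : S.natDegree ≤ d + 1 := by
      rw [hS]
      have := skewMul_natDegree_le σ (C c * X^d) (X - C α)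
      have h1 := natDegree_linear_le (F := F) α
      omega
    have hmcoeff : ∀ u, (C c * X^d : F[X]).coeff u = if u = d then c else 0 := by
      intro u
      rw [coeff_C_mul, coeff_X_pow]
      by_cases h : u = d <;> simp [h, eq_comm]
    have hScoeff : S.coeff (d+1) = c := by
      rw [hS, skewMul_coeff]
      rw [Finset.sum_eq_single d]
      · rw [hmcoeff, if_pos rfl]
        have : (X - C α : F[X]).coeff (d + 1 - d) = 1 := by
          simp [Nat.add_sub_cancel_left, coeff_C]
        rw [this, map_one, mul_one]
      · intro u _ hu
        rw [hmcoeff, if_neg hu, zero_mul]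
      · intro h
        exact absurd (Finset.mem_range.mpr (by omega)) h
    set p₂ : F[X] := p - S with hp₂
    have hp₂deg : p₂.natDegree ≤ d := by
      apply natDegree_le_iff_coeff_eq_zero.mpr
      intro N hN
      rw [hp₂, coeff_sub]
      rcases Nat.lt_or_ge N (d + 2) with h | h
      · have hN1 : N = d + 1 := by omega
        rw [hN1, hScoeff, ← hdeg, hc, hdeg]
        exact sub_self _
      · rw [coeff_eq_zero_of_natDegree_lt (by omega),
          coeff_eq_zero_of_natDegree_lt (by omega), sub_zero]
    obtain ⟨q₂, ρ, hpq, hor, _⟩ := ih p₂ hp₂deg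
    have hq₂d : q₂.coeff d = 0 := by
      rcases hor with h | h
      · rw [h, coeff_zero]
      · exact coeff_eq_zero_of_natDegree_lt (by omega)
    refine ⟨C c * X^d + q₂, ρ, ?_, Or.inr ?_, fun _ => ?_⟩
    · rw [skewMul_add_left, ← hS]
      have : p = p₂ + S := by rw [hp₂]; ring
      rw [this, hpq]; ring
    · have := natDegree_add_le (C c * X^d) q₂
      have hq₂deg : q₂.natDegree ≤ d := by
        rcases hor with h | h
        · rw [h, natDegree_zero]; omega
        · omega
      omega
    · rw [hdeg]
      simp only [Nat.add_sub_cancel]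
      rw [coeff_add, hq₂d, add_zero, hmcoeff, if_pos rfl, hc]

lemma skew_factor (P : F[X]) (hP : P ≠ 0) (a b : F) (hb : b ≠ 0)
    (hroot : opev σ P a b = 0) :
    ∃ q : F[X], P = skewMul σ q (X - C (σ b * a * b⁻¹)) ∧ q ≠ 0 ∧
      q.natDegree < P.natDegree := by
  have hPdeg : P.natDegree ≠ 0 := by
    intro h0
    rw [eq_C_of_natDegree_eq_zero h0, opev_C] at hroot
    rcases mul_eq_zero.mp hroot with h | h
    · exact hP (by rw [eq_C_of_natDegree_eq_zero h0, h, map_zero])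
    · exact hb h
  obtain ⟨q, ρ, hpq, hor, hcoef⟩ := skew_div σ (σ b * a * b⁻¹) P.natDegree P le_rfl
  have hρ : ρ = 0 := by
    have hthis := hroot
    rw [hpq, opev_add, opev_skewMul, opev_linear, opev_C] at hthis
    have hz : σ b * a - σ b * a * b⁻¹ * b = 0 := by field_simp; ring
    rw [hz, opev_zero_right, zero_add] at hthis
    rcases mul_eq_zero.mp hthis with h | h
    · exact h
    · exact absurd h hb
  have hq0 : q ≠ 0 := by
    intro h
    have := hcoef hPdeg
    rw [h, coeff_zero] at this
    exact (mt leadingCoeff_eq_zero.mp hP) this.symm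
  refine ⟨q, ?_, hq0, ?_⟩
  · rw [hpq, hρ, map_zero, add_zero]
  · rcases hor with h | h
    · exact absurd h hq0
    · exact h

lemma Ksmul (lam : fixedSubfield σ) (x : F) : lam • x = (lam : F) * x := by
  rw [Subfield.smul_def]; rfl

lemma Kfix (lam : fixedSubfield σ) : σ (lam : F) = (lam : F) := lam.2

lemma li_of_eq {p p' : ℕ} (c : ℕ → F) (h : p = p') :
    LinearIndependent (fixedSubfield σ) (fun j : Fin p => c j.1) →
    LinearIndependent (fixedSubfield σ) (fun j : Fin p' => c j.1) := by
  subst h; exact id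

lemma skew_counting : ∀ (N : ℕ) (P : F[X]), P ≠ 0 →
    ∀ (L : ℕ) (a : Fin L → F), (∀ i, a i ≠ 0) →
    (∀ i i' : Fin L, i ≠ i' → ¬ ∃ c : F, c ≠ 0 ∧ σ c * a i * c⁻¹ = a i') →
    ∀ (n : Fin L → ℕ) (b : Fin L → ℕ → F),
    (∀ i, LinearIndependent (fixedSubfield σ) (fun j : Fin (n i) => b i j.1)) →
    (∀ i, ∀ j < n i, opev σ P (a i) (b i j) = 0) →
    ∑ i, n i = N → N ≤ P.natDegree := by
  intro N
  induction N with
  | zero => intro _ _ _ _ _ _ _ _ _ _ _; exact Nat.zero_le _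
  | succ N ih =>
    intro P hP L a ha hconj n b hli hroot hsum
    have hex : ∃ i₀, 0 < n i₀ := by
      by_contra h
      push_neg at h
      have : ∑ i, n i = 0 := Finset.sum_eq_zero fun i _ => Nat.le_zero.mp (h i)
      omega
    obtain ⟨i₀, hi₀⟩ := hex
    obtain ⟨m, hm⟩ : ∃ m, n i₀ = m + 1 := ⟨n i₀ - 1, by omega⟩
    set b₀ := b i₀ 0 with hb₀
    have hb₀ne : b₀ ≠ 0 := (hli i₀).ne_zero (⟨0, hi₀⟩ : Fin (n i₀))
    obtain ⟨q, hPq, hq0, hqdeg⟩ :=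
      skew_factor σ P hP (a i₀) b₀ hb₀ne (hroot i₀ 0 hi₀)
    set α := σ b₀ * (a i₀) * b₀⁻¹ with hα
    have hΛsmul : ∀ (i : Fin L) (lam : fixedSubfield σ) (c : F),
        σ ((lam : F) * c) * a i - α * ((lam : F) * c)
          = (lam : F) * (σ c * a i - α * c) := by
      intro i lam c
      rw [map_mul, Kfix]
      ring
    set Λ : Fin L → (F →ₗ[fixedSubfield σ] F) := fun i =>
      { toFun := fun c => σ c * a i - α * c
        map_add' := by
          intro x y
          show σ (x + y) * a i - α * (x + y) = _
          rw [map_add]; ring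
        map_smul' := by
          intro lam x
          simp only [Ksmul, RingHom.id_apply]
          exact hΛsmul i lam x } with hΛ
    have hΛapp : ∀ i c, Λ i c = σ c * a i - α * c := fun i c => rfl
    have htrans : ∀ i c, opev σ P (a i) c = opev σ q (a i) (Λ i c) := by
      intro i c
      rw [hPq, opev_skewMul, opev_linear, hΛapp, hα]
    have hker_ne : ∀ i, i ≠ i₀ → ∀ c, Λ i c = 0 → c = 0 := by
      intro i hne c hc
      by_contra hc0
      rw [hΛapp] at hc
      have hh : σ c * a i = α * c := sub_eq_zero.mp hc
      apply hconj i i₀ hne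
      refine ⟨b₀⁻¹ * c, by simp [hb₀ne, hc0], ?_⟩
      have hσb : σ b₀ ≠ 0 := fun h => hb₀ne (by simpa using σ.injective (by simp [h]))
      rw [hα] at hh
      rw [map_mul, map_inv₀]
      field_simp
      field_simp at hh
      linear_combination hh
    have hker₀ : ∀ c, Λ i₀ c = 0 → ∃ lam : F, σ lam = lam ∧ c = lam * b₀ := by
      intro c hc
      by_cases hc0 : c = 0
      · exact ⟨0, by simp, by simp [hc0]⟩
      rw [hΛapp] at hc
      have hh : σ c * a i₀ = α * c := sub_eq_zero.mp hc
      rw [hα] at hh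
      have hσb : σ b₀ ≠ 0 := fun h => hb₀ne (by simpa using σ.injective (by simp [h]))
      refine ⟨c * b₀⁻¹, ?_, by field_simp⟩
      rw [map_mul, map_inv₀]
      have ha₀ := ha i₀
      field_simp
      field_simp at hh
      have hh2 : σ c * b₀ = σ b₀ * c :=
        mul_left_cancel₀ ha₀ (by linear_combination (a i₀) * hh)
      linear_combination hh2
    set n' : Fin L → ℕ := Function.update n i₀ m with hn'
    set b' : Fin L → ℕ → F := fun i j => Λ i (b i (if i = i₀ then j + 1 else j)) with hb'
    have hn'i₀ : n' i₀ = m := Function.update_self i₀ m n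
    have hn'ne : ∀ i, i ≠ i₀ → n' i = n i := fun i h => Function.update_of_ne h m n
    have hli' : ∀ i, LinearIndependent (fixedSubfield σ) (fun j : Fin (n' i) => b' i j.1) := by
      intro i
      by_cases hii : i = i₀
      · subst hii
        apply li_of_eq σ (b' i) hn'i₀.symm
        rw [Fintype.linearIndependent_iff]
        intro g hg
        have hsum0 : Λ i (∑ j : Fin m, g j • b i (j.1 + 1)) = 0 := by
          rw [map_sum, ← hg]
          refine Finset.sum_congr rfl fun j _ => ?_
          rw [map_smul]
          congr 1
          simp [hb']
        obtain ⟨lam, hlam, hceq⟩ := hker₀ _ hsum0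
        have hliT := li_of_eq σ (b i) hm (hli i)
        have hzero : ∑ j : Fin (m+1),
            (Fin.cases (motive := fun _ => fixedSubfield σ) (-(⟨lam, hlam⟩ : fixedSubfield σ)) g j) • b i j.1 = 0 := by
          rw [Fin.sum_univ_succ]
          simp only [Fin.cases_zero, Fin.cases_succ, Fin.val_succ, Fin.val_zero]
          rw [hceq, neg_smul, Ksmul, hb₀]
          ring
        have hgall := Fintype.linearIndependent_iff.mp hliT _ hzero
        intro j
        have h2 := hgall (Fin.succ j)
        rwa [Fin.cases_succ] at h2
      · apply li_of_eq σ (b' i) (hn'ne i hii).symm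
        rw [Fintype.linearIndependent_iff]
        intro g hg
        have hsum0 : Λ i (∑ j : Fin (n i), g j • b i j.1) = 0 := by
          rw [map_sum, ← hg]
          refine Finset.sum_congr rfl fun j _ => ?_
          rw [map_smul]
          congr 1
          simp [hb', if_neg hii]
        have h0 := hker_ne i hii _ hsum0
        exact Fintype.linearIndependent_iff.mp (hli i) g h0
    have hroot' : ∀ i, ∀ j < n' i, opev σ q (a i) (b' i j) = 0 := by
      intro i j hj
      have : b' i j = Λ i (b i (if i = i₀ then j + 1 else j)) := rfl
      rw [this, ← htrans]
      by_cases hii : i = i₀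
      · subst hii
        rw [if_pos rfl]
        refine hroot _ (j+1) ?_
        rw [hm]
        rw [hn'i₀] at hj
        omega
      · rw [if_neg hii]
        exact hroot i _ (by rw [← hn'ne i hii]; exact hj)
    have hsum' : ∑ i, n' i = N := by
      have h1 := Finset.sum_update_of_mem (Finset.mem_univ i₀) n m
      rw [Finset.sdiff_singleton_eq_erase] at h1
      have h2 := Finset.add_sum_erase Finset.univ n (Finset.mem_univ i₀)
      rw [hn']
      omega
    have := ih q hq0 L a ha hconj n' b' hli' hroot' hsum'
    omega

open IntermediateField in
lemma gamma_li [Fintype F] (γ : F) (hprim : ∀ x : F, x ≠ 0 → ∃ j : ℕ, x = γ ^ j)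
    (M : ℕ) (hM : M ≤ Module.finrank (fixedSubfield σ) F) :
    LinearIndependent (fixedSubfield σ) (fun t : Fin M => γ ^ t.1) := by
  set K := fixedSubfield σ with hK
  have hfin : Module.Finite K F := Module.Finite.of_finite
  have hint : IsIntegral K γ := IsIntegral.of_finite K γ
  have htop : K⟮γ⟯ = (⊤ : IntermediateField K F) := by
    rw [eq_top_iff]
    intro x _
    by_cases hx : x = 0
    · rw [hx]; exact zero_mem _
    · obtain ⟨j, hj⟩ := hprim x hx
      rw [hj]
      exact pow_mem (IntermediateField.mem_adjoin_simple_self K γ) j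
  have hfr : Module.finrank K F ≤ (minpoly K γ).natDegree := by
    rw [← IntermediateField.adjoin.finrank hint, htop, IntermediateField.finrank_top']
  have hle : M ≤ (minpoly K γ).natDegree := le_trans hM hfr
  have h1 := (linearIndependent_pow (K := K) (S := F) γ).comp
    (Fin.castLE hle) (Fin.castLE_injective hle)
  exact h1

lemma ker_family [Fintype F] {h N t : ℕ} (M : Matrix (Fin h) (Fin N) F)
    (hrank : Module.finrank (fixedSubfield σ)
      (Submodule.span (fixedSubfield σ)
        (Set.range fun j : Fin N => fun r : Fin h => M r j)) = t) :
    ∃ w : Fin (N - t) → (Fin N → fixedSubfield σ),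
      LinearIndependent (fixedSubfield σ) w ∧
      ∀ κ (r : Fin h), ∑ j, ((w κ j : F) * M r j) = 0 := by
  set K := fixedSubfield σ with hK
  set cols : Fin N → (Fin h → F) := fun j r => M r j with hcols
  set φ : (Fin N → K) →ₗ[K] (Fin h → F) := Fintype.linearCombination K cols with hφ
  have hrange : LinearMap.range φ = Submodule.span K (Set.range cols) :=
    Fintype.range_linearCombination K cols
  have hrk : Module.finrank K ↥(LinearMap.range φ) + Module.finrank K ↥(LinearMap.ker φ)
      = N := by
    rw [LinearMap.finrank_range_add_finrank_ker φ, Module.finrank_fin_fun]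
  have hkerdim : Module.finrank K ↥(LinearMap.ker φ) = N - t := by
    rw [hrange] at hrk
    rw [hrank] at hrk
    omega
  have hbasis := Module.finBasis K ↥(LinearMap.ker φ)
  set e : Fin (N - t) ≃ Fin (Module.finrank K ↥(LinearMap.ker φ)) := finCongr hkerdim.symm
  set w : Fin (N - t) → (Fin N → K) := fun κ => ((hbasis (e κ)) : Fin N → K) with hw
  have hli : LinearIndependent K w := by
    have h1 := (hbasis.linearIndependent.map' (LinearMap.ker φ).subtype
      (Submodule.ker_subtype _)).comp e e.injective
    exact h1
  refine ⟨w, hli, ?_⟩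
  intro κ r
  have hmem : w κ ∈ LinearMap.ker φ := (hbasis (e κ)).2
  have hφ0 : φ (w κ) = 0 := hmem
  rw [hφ, Fintype.linearCombination_apply] at hφ0
  have h2 := congr_fun hφ0 r
  rw [Finset.sum_apply, Pi.zero_apply] at h2
  rw [← h2]
  apply Finset.sum_congr rfl
  intro j _
  rw [Pi.smul_apply, Ksmul]

noncomputable def twistP (c : F) (g : F[X]) : F[X] :=
  ∑ t ∈ g.support, C (g.coeff t * (σ^t) c) * X^t

lemma twistP_coeff (c : F) (g : F[X]) (n : ℕ) :
    (twistP σ c g).coeff n = g.coeff n * (σ^n) c := by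
  rw [twistP, finset_sum_coeff]
  simp only [coeff_C_mul, coeff_X_pow]
  rw [Finset.sum_eq_single n]
  · by_cases h : n ∈ g.support
    · simp
    · simp [notMem_support_iff.mp h]
  · intro t _ ht
    rw [if_neg (by omega), mul_zero]
  · intro h
    rw [notMem_support_iff.mp h, zero_mul, if_pos rfl, mul_one]

lemma twistP_natDegree_le (c : F) (g : F[X]) : (twistP σ c g).natDegree ≤ g.natDegree := by
  apply natDegree_le_iff_coeff_eq_zero.mpr
  intro N hN
  rw [twistP_coeff, coeff_eq_zero_of_natDegree_lt hN, zero_mul]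

lemma opev_twistP (c : F) (g : F[X]) (a b : F) :
    opev σ (twistP σ c g) a b = opev σ g a (c * b) := by
  have h1 : (twistP σ c g).natDegree < g.natDegree + 1 :=
    lt_of_le_of_lt (twistP_natDegree_le σ c g) (Nat.lt_succ_self _)
  rw [opev_eq_range σ _ a b h1, opev_eq_range σ g a (c * b) (Nat.lt_succ_self _)]
  apply Finset.sum_congr rfl
  intro t _
  rw [twistP_coeff, Dit_mul, mul_assoc]

lemma opev_Klinear (p : F[X]) (a : F) {ι : Type*} (tset : Finset ι)
    (cK : ι → fixedSubfield σ) (x : ι → F) :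
    opev σ p a (∑ j ∈ tset, (cK j : F) * x j)
      = ∑ j ∈ tset, (cK j : F) * opev σ p a (x j) := by
  induction tset using Finset.cons_induction with
  | empty => simp [opev_zero_right]
  | cons i t hi ih =>
    rw [Finset.sum_cons, Finset.sum_cons, opev_add_right, ih,
      opev_smul_right σ p a _ _ (Kfix σ (cK i))]

lemma triple_comm {A B C M : Type*} [Fintype A] [Fintype B] [Fintype C] [AddCommMonoid M]
    (T : A → B → C → M) :
    ∑ c : C, ∑ b : B, ∑ a : A, T a b c = ∑ a : A, ∑ b : B, ∑ c : C, T a b c := by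
  calc ∑ c : C, ∑ b : B, ∑ a : A, T a b c
      = ∑ b : B, ∑ c : C, ∑ a : A, T a b c := Finset.sum_comm
    _ = ∑ b : B, ∑ a : A, ∑ c : C, T a b c :=
        Finset.sum_congr rfl fun b _ => Finset.sum_comm
    _ = ∑ a : A, ∑ b : B, ∑ c : C, T a b c := Finset.sum_comm

end Toolkit

/-- If `Q` is a nonzero solution of the FLRS interpolation problem and
`D ≤ Σ_i (N_i − t_i)(h_i − s + 1)`, then the univariate skew polynomial
`P(x) = Q_0(x) + Σ_{r=1}^s Q_r(x) f(x) γ^{r−1}` is the zero polynomial. -/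
theorem stmt_10 (F : Type*) [Field F] [Fintype F] (σ : F ≃+* F)
    (ℓ s k D : ℕ) (hℓ : 0 < ℓ) (hs : 1 ≤ s) (hk : 1 ≤ k) (hkD : k ≤ D)
    (hv Nv tv : Fin ℓ → ℕ) (hsh : ∀ i, s ≤ hv i) (hNpos : ∀ i, 0 < Nv i)
    (hNh : ∀ i, Nv i ≤ hv i)
    (hnm : ∀ i, hv i * Nv i ≤ Module.finrank (fixedSubfield σ) F)
    (γ : F) (hγ0 : γ ≠ 0) (hprim : ∀ x : F, x ≠ 0 → ∃ j : ℕ, x = γ ^ j)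
    (a : Fin ℓ → F) (ha0 : ∀ i, a i ≠ 0)
    (hconj : ∀ i i' : Fin ℓ, i ≠ i' →
      ¬ ∃ c : F, c ≠ 0 ∧ σ c * a i * c⁻¹ = a i')
    -- message polynomial and codeword-plus-error received word
    (f : Polynomial F) (hf : f.degree < (k : ℕ))
    (E : ∀ i : Fin ℓ, Matrix (Fin (hv i)) (Fin (Nv i)) F)
    (htv : ∀ i, colRank σ (E i) = tv i)
    (R : ∀ i : Fin ℓ, Matrix (Fin (hv i)) (Fin (Nv i)) F)
    (hR : ∀ i r c, R i r c = opev σ f (a i) (γ ^ (c.1 * hv i + r.1)) + E i r c)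
    -- a nonzero solution `Q = (Q_0, ..., Q_s)` of the interpolation problem
    (Q : Fin (s + 1) → Polynomial F)
    (hQne : ∃ r, Q r ≠ 0)
    (hdeg0 : (Q 0).degree < (D : ℕ))
    (hdegr : ∀ r : Fin s, (Q r.succ).degree < ((D - k + 1 : ℕ) : ℕ))
    (hvanish : ∀ (i : Fin ℓ) (j : Fin (Nv i)) (l : Fin (hv i - s + 1)),
      opev σ (Q 0) (a i) (γ ^ (j.1 * hv i + l.1)) +
        ∑ r : Fin s, opev σ (Q r.succ) (a i)
          (R i ⟨l.1 + r.1, by have h1 := l.2; have h2 := r.2; have h3 := hsh i; omega⟩ j)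
        = 0)
    -- decoding-radius condition on the degree bound
    (hDle : D ≤ ∑ i, (Nv i - tv i) * (hv i - s + 1)) :
    -- the skew polynomial `P = Q_0 + Σ_r Q_{r+1}·f·γ^r` has all coefficients zero
    ∀ n : ℕ, (Q 0).coeff n +
      ∑ r : Fin s, ∑ u ∈ Finset.range (n + 1),
        (Q r.succ).coeff u * (⇑σ)^[u] (f.coeff (n - u) * (⇑σ)^[n - u] (γ ^ r.1)) = 0 := by
  classical
  set P : F[X] := Q 0 + ∑ r : Fin s, skewMul σ (Q r.succ) (twistP σ (γ^r.1) f) with hPdef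
  suffices hP0 : P = 0 by
    intro n
    have hPc : P.coeff n = (Q 0).coeff n +
        ∑ r : Fin s, ∑ u ∈ Finset.range (n + 1),
          (Q r.succ).coeff u * (σ^u) (f.coeff (n - u) * (σ^(n-u)) (γ ^ r.1)) := by
      rw [hPdef, coeff_add, finset_sum_coeff]
      congr 1
      refine Finset.sum_congr rfl fun r _ => ?_
      rw [skewMul_coeff]
      refine Finset.sum_congr rfl fun u _ => ?_
      rw [twistP_coeff]
    simp only [iter_eq_pow σ]
    rw [← hPc, hP0, coeff_zero]
  by_contra hPne
  choose w hwli hwker using fun i => ker_family σ (E i) (htv i)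
  set wpad : (i : Fin ℓ) → ℕ → (Fin (Nv i) → fixedSubfield σ) := fun i κ =>
    if h : κ < Nv i - tv i then w i ⟨κ, h⟩ else 0 with hwpaddef
  set b : Fin ℓ → ℕ → F := fun i e => ∑ j : Fin (Nv i),
      ((wpad i (e / (hv i - s + 1)) j : F) * γ ^ (j.1 * hv i + e % (hv i - s + 1))) with hbdef
  set nn : Fin ℓ → ℕ := fun i => (Nv i - tv i) * (hv i - s + 1) with hnndef
  have hli : ∀ i, LinearIndependent (fixedSubfield σ) (fun e : Fin (nn i) => b i e.1) := by
    intro i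
    have hWpos : 0 < hv i - s + 1 := by omega
    have hhpos : 0 < hv i := by have := hsh i; omega
    have hpow := gamma_li σ γ hprim (hv i * Nv i) (hnm i)
    have hb1 : ∀ p : Fin (Nv i) × Fin (hv i - s + 1), p.1.1 * hv i + p.2.1 < hv i * Nv i := by
      intro p
      have h1 : p.2.1 < hv i := by
        have := p.2.2
        have := hsh i
        omega
      have h2 : p.1.1 + 1 ≤ Nv i := p.1.2
      calc p.1.1 * hv i + p.2.1 < (p.1.1 + 1) * hv i := by
            have h3 : (p.1.1 + 1) * hv i = p.1.1 * hv i + hv i := by ring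
            omega
        _ ≤ Nv i * hv i := Nat.mul_le_mul_right _ h2
        _ = hv i * Nv i := Nat.mul_comm _ _
    have hdiv : ∀ (x l : ℕ), l < hv i → (x * hv i + l) / hv i = x := by
      intro x l hl
      rw [Nat.mul_comm, Nat.mul_add_div hhpos, Nat.div_eq_of_lt hl, Nat.add_zero]
    have hinj : Function.Injective (fun p : Fin (Nv i) × Fin (hv i - s + 1) =>
        (⟨p.1.1 * hv i + p.2.1, hb1 p⟩ : Fin (hv i * Nv i))) := by
      intro p q hpq
      have hval : p.1.1 * hv i + p.2.1 = q.1.1 * hv i + q.2.1 := congrArg Fin.val hpq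
      have hp2 : p.2.1 < hv i := by have := p.2.2; have := hsh i; omega
      have hq2 : q.2.1 < hv i := by have := q.2.2; have := hsh i; omega
      have h1 : p.1.1 = q.1.1 := by
        calc p.1.1 = (p.1.1 * hv i + p.2.1) / hv i := (hdiv _ _ hp2).symm
          _ = (q.1.1 * hv i + q.2.1) / hv i := by rw [hval]
          _ = q.1.1 := hdiv _ _ hq2
      have h2 : p.2.1 = q.2.1 := by rw [h1] at hval; omega
      exact Prod.ext (Fin.ext h1) (Fin.ext h2)
    have li2 : LinearIndependent (fixedSubfield σ)
        (fun p : Fin (Nv i) × Fin (hv i - s + 1) => γ ^ (p.1.1 * hv i + p.2.1)) :=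
      hpow.comp _ hinj
    have hvfam : LinearIndependent (fixedSubfield σ)
        (fun p : Fin (Nv i - tv i) × Fin (hv i - s + 1) =>
          ∑ j : Fin (Nv i), ((w i p.1 j : F) * γ ^ (j.1 * hv i + p.2.1))) := by
      rw [Fintype.linearIndependent_iff]
      intro G hG
      have e1 : ∀ p : Fin (Nv i - tv i) × Fin (hv i - s + 1),
          G p • (∑ j : Fin (Nv i), ((w i p.1 j : F) * γ ^ (j.1 * hv i + p.2.1)))
            = ∑ j : Fin (Nv i), (G p * w i p.1 j) • γ ^ (j.1 * hv i + p.2.1) := by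
        intro p
        rw [Finset.smul_sum]
        refine Finset.sum_congr rfl fun j _ => ?_
        rw [← Ksmul σ (w i p.1 j), smul_smul]
      have hGexp : ∑ κ2 : Fin (Nv i - tv i), ∑ l : Fin (hv i - s + 1), ∑ j : Fin (Nv i),
          (G (κ2, l) * w i κ2 j) • γ ^ (j.1 * hv i + l.1) = 0 := by
        rw [← hG, Fintype.sum_prod_type]
        refine Finset.sum_congr rfl fun κ2 _ => Finset.sum_congr rfl fun l _ => ?_
        exact (e1 (κ2, l)).symm
      have hG2 : ∑ p : Fin (Nv i) × Fin (hv i - s + 1),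
          (∑ κ2 : Fin (Nv i - tv i), G (κ2, p.2) * w i κ2 p.1) • γ ^ (p.1.1 * hv i + p.2.1)
            = 0 := by
        rw [Fintype.sum_prod_type]
        calc (∑ j : Fin (Nv i), ∑ l : Fin (hv i - s + 1),
              (∑ κ2 : Fin (Nv i - tv i), G (κ2, l) * w i κ2 j) • γ ^ (j.1 * hv i + l.1))
            = ∑ j : Fin (Nv i), ∑ l : Fin (hv i - s + 1), ∑ κ2 : Fin (Nv i - tv i),
                (G (κ2, l) * w i κ2 j) • γ ^ (j.1 * hv i + l.1) :=
              Finset.sum_congr rfl fun j _ => Finset.sum_congr rfl fun l _ => Finset.sum_smul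
          _ = 0 := by rw [triple_comm]; exact hGexp
      have hall := Fintype.linearIndependent_iff.mp li2 _ hG2
      intro p0
      have hfun : ∑ κ2 : Fin (Nv i - tv i), G (κ2, p0.2) • w i κ2 = 0 := by
        ext j
        rw [Finset.sum_apply, Pi.zero_apply]
        have h7 := hall (j, p0.2)
        simp only [Pi.smul_apply, smul_eq_mul]
        exact_mod_cast h7
      have hfin := Fintype.linearIndependent_iff.mp (hwli i) _ hfun p0.1
      simpa using hfin
    have hb2 : ∀ e : Fin (nn i), e.1 / (hv i - s + 1) < Nv i - tv i := by
      intro e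
      have he := e.2
      simp only [hnndef] at he
      exact (Nat.div_lt_iff_lt_mul hWpos).mpr he
    have hfeq : (fun e : Fin (nn i) => b i e.1)
        = (fun p : Fin (Nv i - tv i) × Fin (hv i - s + 1) =>
            ∑ j : Fin (Nv i), ((w i p.1 j : F) * γ ^ (j.1 * hv i + p.2.1)))
          ∘ (fun e : Fin (nn i) => (⟨e.1 / (hv i - s + 1), hb2 e⟩,
              ⟨e.1 % (hv i - s + 1), Nat.mod_lt _ hWpos⟩)) := by
      funext e
      simp only [Function.comp_apply, hbdef]
      refine Finset.sum_congr rfl fun j _ => ?_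
      simp only [hwpaddef]
      rw [dif_pos (hb2 e)]
    have hinj2 : Function.Injective (fun e : Fin (nn i) =>
        ((⟨e.1 / (hv i - s + 1), hb2 e⟩ : Fin (Nv i - tv i)),
         (⟨e.1 % (hv i - s + 1), Nat.mod_lt _ hWpos⟩ : Fin (hv i - s + 1)))) := by
      intro e1' e2' h12
      have hd := congrArg (fun p : Fin (Nv i - tv i) × Fin (hv i - s + 1) => (p.1 : ℕ)) h12
      have hm2 := congrArg (fun p : Fin (Nv i - tv i) × Fin (hv i - s + 1) => (p.2 : ℕ)) h12
      simp only [] at hd hm2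
      have q1 := Nat.div_add_mod e1'.1 (hv i - s + 1)
      have q2 := Nat.div_add_mod e2'.1 (hv i - s + 1)
      apply Fin.ext
      rw [hd, hm2] at q1
      omega
    rw [hfeq]
    exact hvfam.comp _ hinj2
  have hroots : ∀ i, ∀ e < nn i, opev σ P (a i) (b i e) = 0 := by
    intro i e he
    simp only [hnndef] at he
    have hWpos : 0 < hv i - s + 1 := by omega
    have hκlt : e / (hv i - s + 1) < Nv i - tv i :=
      (Nat.div_lt_iff_lt_mul hWpos).mpr he
    have hllt : e % (hv i - s + 1) < hv i - s + 1 := Nat.mod_lt _ hWpos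
    set κ : Fin (Nv i - tv i) := ⟨e / (hv i - s + 1), hκlt⟩ with hκdef
    set lf : Fin (hv i - s + 1) := ⟨e % (hv i - s + 1), hllt⟩ with hlfdef
    have hrow : ∀ r : Fin s, lf.1 + r.1 < hv i := by
      intro r
      have h1 := r.2
      have h2 := hsh i
      have h3 : lf.1 < hv i - s + 1 := lf.2
      omega
    have hbe : b i e = ∑ j : Fin (Nv i), ((w i κ j : F) * γ ^ (j.1 * hv i + lf.1)) := by
      simp only [hbdef]
      refine Finset.sum_congr rfl fun j _ => ?_
      simp only [hwpaddef]
      rw [dif_pos hκlt]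
    have hX : ∑ j : Fin (Nv i), (w i κ j : F) *
        (opev σ (Q 0) (a i) (γ ^ (j.1 * hv i + lf.1)) +
          ∑ r : Fin s, opev σ (Q r.succ) (a i) (R i ⟨lf.1 + r.1, hrow r⟩ j)) = 0 :=
      Finset.sum_eq_zero fun j _ => mul_eq_zero_of_right _ (hvanish i j lf)
    have hQ0part : ∑ j : Fin (Nv i), (w i κ j : F) *
        opev σ (Q 0) (a i) (γ ^ (j.1 * hv i + lf.1)) = opev σ (Q 0) (a i) (b i e) := by
      rw [hbe, opev_Klinear σ (Q 0) (a i) Finset.univ (w i κ)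
        (fun j => γ ^ (j.1 * hv i + lf.1))]
    have hRpart : ∀ r : Fin s,
        ∑ j : Fin (Nv i), (w i κ j : F) *
            opev σ (Q r.succ) (a i) (R i ⟨lf.1 + r.1, hrow r⟩ j)
          = opev σ (Q r.succ) (a i) (opev σ f (a i) (γ ^ r.1 * b i e)) := by
      intro r
      rw [← opev_Klinear σ (Q r.succ) (a i) Finset.univ (w i κ)
        (fun j => R i ⟨lf.1 + r.1, hrow r⟩ j)]
      congr 1
      have h6 : ∑ j : Fin (Nv i), (w i κ j : F) * R i ⟨lf.1 + r.1, hrow r⟩ j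
          = ∑ j : Fin (Nv i), ((w i κ j : F) *
              opev σ f (a i) (γ ^ (j.1 * hv i + (lf.1 + r.1)))
            + (w i κ j : F) * E i ⟨lf.1 + r.1, hrow r⟩ j) := by
        refine Finset.sum_congr rfl fun j _ => ?_
        rw [hR i ⟨lf.1 + r.1, hrow r⟩ j, mul_add]
      rw [h6, Finset.sum_add_distrib, hwker i κ ⟨lf.1 + r.1, hrow r⟩, add_zero,
        ← opev_Klinear σ f (a i) Finset.univ (w i κ)
          (fun j => γ ^ (j.1 * hv i + (lf.1 + r.1)))]
      congr 1
      rw [hbe, Finset.mul_sum]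
      refine Finset.sum_congr rfl fun j _ => ?_
      have hpow : j.1 * hv i + (lf.1 + r.1) = (j.1 * hv i + lf.1) + r.1 := by omega
      rw [hpow, pow_add]
      ring
    have hexp : opev σ P (a i) (b i e)
        = opev σ (Q 0) (a i) (b i e)
          + ∑ r : Fin s, opev σ (Q r.succ) (a i) (opev σ f (a i) (γ ^ r.1 * b i e)) := by
      rw [hPdef, opev_add, opev_sum]
      congr 1
      refine Finset.sum_congr rfl fun r _ => ?_
      rw [opev_skewMul, opev_twistP]
    rw [hexp, ← hQ0part]
    have hswap : ∑ r : Fin s, opev σ (Q r.succ) (a i) (opev σ f (a i) (γ ^ r.1 * b i e))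
        = ∑ r : Fin s, ∑ j : Fin (Nv i), (w i κ j : F) *
            opev σ (Q r.succ) (a i) (R i ⟨lf.1 + r.1, hrow r⟩ j) :=
      Finset.sum_congr rfl fun r _ => (hRpart r).symm
    rw [hswap, Finset.sum_comm, ← hX, ← Finset.sum_add_distrib]
    refine Finset.sum_congr rfl fun j _ => ?_
    rw [mul_add, Finset.mul_sum]
  have hcount := skew_counting σ (∑ i, nn i) P hPne ℓ a ha0 hconj nn b hli hroots rfl
  have hdeg : P.natDegree < D := by
    have hfd : f.natDegree < k := by
      by_cases hf0 : f = 0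
      · rw [hf0, natDegree_zero]; omega
      · exact (natDegree_lt_iff_degree_lt hf0).mpr hf
    have hQ0d : (Q 0).natDegree < D := by
      by_cases h0 : Q 0 = 0
      · rw [h0, natDegree_zero]; omega
      · exact (natDegree_lt_iff_degree_lt h0).mpr hdeg0
    have hQrd : ∀ r : Fin s, (Q r.succ).natDegree ≤ D - k := by
      intro r
      by_cases h0 : Q r.succ = 0
      · rw [h0, natDegree_zero]; omega
      · have := (natDegree_lt_iff_degree_lt h0).mpr (hdegr r)
        omega
    have h1 : (∑ r : Fin s, skewMul σ (Q r.succ) (twistP σ (γ^r.1) f)).natDegree ≤ D - 1 := by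
      apply natDegree_sum_le_of_forall_le
      intro r _
      calc (skewMul σ (Q r.succ) (twistP σ (γ^r.1) f)).natDegree
          ≤ (Q r.succ).natDegree + (twistP σ (γ^r.1) f).natDegree :=
            skewMul_natDegree_le σ _ _
        _ ≤ (D - k) + (k - 1) :=
            add_le_add (hQrd r) (le_trans (twistP_natDegree_le σ _ _) (by omega))
        _ ≤ D - 1 := by omega
    have h2 := natDegree_add_le (Q 0) (∑ r : Fin s, skewMul σ (Q r.succ) (twistP σ (γ^r.1) f))
    rw [hPdef]
    exact lt_of_le_of_lt h2 (max_lt hQ0d (lt_of_le_of_lt h1 (by omega)))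
  have hge : D ≤ ∑ i, nn i := hDle
  omega
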